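/- In the mirror model, for any configuration ξ of the internal mirrors on the wall between ring R₁ and ring R₂, provided ξ = 1 on the outer walls and ξ = 1 on the wall between R₂ and R₃, the single-particle map F_ξ is a bijection of Σ̂₁ = (R₁ ∪ R₂) × P onto itself; consequently the uniform probability distribution ρ₁ on Σ₁ = ((R₁ ∪ R₂) × P)^N, i.e. ρ₁(q,p) = Π_{i=1}^N (1/(8R)) 1_{R₁∪R₂}(q_i), is invariant under the N-particle dynamics U_ξ(·,t) for every t ≥ 1. -/

import Mathlib

/-!
Common setup for the mirror model of Lefevere–Sasa:
non-interacting particles on three vertical rings `R₁, R₂, R₃`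
(columns `0,1,2` of `Fin 3`, vertical coordinate in `Fin R`, periodic),
with velocities `±e₊, ±e₋` and random mirrors on the internal walls.
-/

namespace Mirror

/-- The four velocities: `pe = e₊`, `me = -e₊`, `pm = e₋`, `mm = -e₋`. -/
inductive Vel : Type
  | pe | me | pm | mm
  deriving DecidableEq

instance : Fintype Vel where
  elems := {.pe, .me, .pm, .mm}
  complete := by intro x; cases x <;> simp

/-- Whether the velocity has a positive horizontal component. -/
def Vel.right : Vel → Bool
  | .pe => true
  | .pm => true
  | _ => false

/-- Positions: column in `{1,2,3}` (encoded `Fin 3`) and vertical coordinate mod `R`. -/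
abbrev Pos (R : ℕ) := Fin 3 × Fin R

/-- Single-particle states: position and velocity. -/
abbrev State (R : ℕ) := Pos R × Vel

/-- A mirror configuration: walls are indexed by `Fin 4`
(`0` = left outer wall, `1` = wall between `R₁,R₂`, `2` = wall between `R₂,R₃`,
`3` = right outer wall) and by the vertical coordinate of the shifted site. -/
abbrev Config (R : ℕ) := Fin 4 → Fin R → Bool

/-- Configurations of the internal walls `S` (walls `1` and `2`). -/
abbrev IConfig (R : ℕ) := Fin 2 → Fin R → Bool

/-- Vertical successor (mod `R`). -/
def fsucc {R : ℕ} (k : Fin R) : Fin R :=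
  ⟨(k.1 + 1) % R, Nat.mod_lt _ (Nat.lt_of_le_of_lt (Nat.zero_le _) k.isLt)⟩

/-- Vertical predecessor (mod `R`). -/
def fpred {R : ℕ} (k : Fin R) : Fin R :=
  ⟨(k.1 + (R - 1)) % R, Nat.mod_lt _ (Nat.lt_of_le_of_lt (Nat.zero_le _) k.isLt)⟩

/-- Vertical coordinate of the shifted mirror site `q + p` encountered by a
particle at vertical coordinate `k` with velocity `p`. -/
def site {R : ℕ} (k : Fin R) : Vel → Fin R
  | .pe => k
  | .mm => k
  | .pm => fpred k
  | .me => fpred k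

/-- Index of the wall on which the mirror site `q + p` lies. -/
def wall (i : Fin 3) (p : Vel) : Fin 4 :=
  if p.right then ⟨i.1 + 1, by have := i.isLt; omega⟩
  else ⟨i.1, by have := i.isLt; omega⟩

/-- One step of the single-particle mirror dynamics
`F_ξ(q,p) = (q + p + π_{ξ(q+p)}(p), π_{ξ(q+p)}(p))`. -/
def step {R : ℕ} (ξ : Config R) : State R → State R :=
  fun x =>
    match x with
    | ((i, k), p) =>
      if ξ (wall i p) (site k p) then
        -- a mirror is present: the velocity is reflected, `p ↦ p̄`
        match p with
        | .pe => ((i, fsucc k), .mm)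
        | .me => ((i, fpred k), .pm)
        | .pm => ((i, fpred k), .me)
        | .mm => ((i, fsucc k), .pe)
      else
        -- no mirror: the particle moves by `2p`
        match p with
        | .pe => ((i + 1, fsucc k), .pe)
        | .me => ((i - 1, fpred k), .me)
        | .pm => ((i + 1, fpred k), .pm)
        | .mm => ((i - 1, fsucc k), .mm)

/-- The iterated dynamics `F_ξ(·,t)`. -/
def iter {R : ℕ} (ξ : Config R) (t : ℕ) : State R → State R := (step ξ)^[t]

/-- The configuration before the switching time: random mirrors `σ` on the wall
between `R₁` and `R₂`, full mirrors (closed wall) between `R₂` and `R₃`,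
full mirrors on the outer walls. -/
def xi1 {R : ℕ} (σ : IConfig R) : Config R :=
  fun j k => if j.1 = 1 then σ 0 k else true

/-- The configuration after the switching time: random mirrors `σ` on both
internal walls, full mirrors on the outer walls. -/
def xi2 {R : ℕ} (σ : IConfig R) : Config R :=
  fun j k => if j.1 = 1 then σ 0 k else if j.1 = 2 then σ 1 k else true

/-- The concatenated single-particle dynamics `F̃(·,t)`: `F¹` up to time `τ`,
then `F²`. -/
def Ftilde {R : ℕ} (σ : IConfig R) (τ t : ℕ) : State R → State R :=
  if t ≤ τ then iter (xi1 σ) t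
  else (iter (xi2 σ) (t - τ)) ∘ (iter (xi1 σ) τ)

/-- The ring (column) on which a state sits. -/
def ring {R : ℕ} (x : State R) : Fin 3 := x.1.1

/-- Bernoulli(γ) product weight of an internal mirror configuration:
the density of the i.i.d. law `Q` of the mirrors. -/
noncomputable def wt (R : ℕ) (γ : ℝ) (σ : IConfig R) : ℝ :=
  ∏ s : Fin 2 × Fin R, (if σ s.1 s.2 then γ else 1 - γ)

open Classical in
/-- `Q`-probability of an event on mirror configurations. -/
noncomputable def Qprob (R : ℕ) (γ : ℝ) (E : IConfig R → Prop) : ℝ :=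
  ∑ σ : IConfig R, if E σ then wt R γ σ else 0

/-- `Q`-expectation of a function of the mirror configuration. -/
noncomputable def Qexp (R : ℕ) (γ : ℝ) (f : IConfig R → ℝ) : ℝ :=
  ∑ σ : IConfig R, wt R γ σ * f σ

/-- `Q`-variance. -/
noncomputable def Qvar (R : ℕ) (γ : ℝ) (f : IConfig R → ℝ) : ℝ :=
  Qexp R γ (fun σ => (f σ - Qexp R γ f) ^ 2)

/-- `b₁(t)` for a given mirror configuration `σ`: the probability that a single
particle, started uniformly on ring `R₁`, is on ring `R₁` at time `t` under `F¹`. -/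
noncomputable def b1 (R : ℕ) (σ : IConfig R) (t : ℕ) : ℝ :=
  (1 / (4 * (R : ℝ))) *
    ∑ x : State R, (if ring x = 0 ∧ ring (iter (xi1 σ) t x) = 0 then 1 else 0)

/-- Single-particle density of the initial Gibbs measure `ρ₀`
(uniform on `R₁ × P`). -/
noncomputable def rho0 (R : ℕ) : State R → ℝ :=
  fun x => if ring x = 0 then 1 / (4 * (R : ℝ)) else 0

/-- Single-particle density of the Gibbs measure `ρ₁`
(uniform on `(R₁ ∪ R₂) × P`). -/
noncomputable def rho1 (R : ℕ) : State R → ℝ :=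
  fun x => if ring x ≠ 2 then 1 / (8 * (R : ℝ)) else 0

/-- Single-particle density of the Gibbs measure `ρ^m` with ring densities `m`:
`ρ̂^m(q,p) = (1/(4R)) Σᵢ mⁱ 1_{Rᵢ}(q)`. -/
noncomputable def rhoM (R : ℕ) (m : Fin 3 → ℝ) : State R → ℝ :=
  fun x => (1 / (4 * (R : ℝ))) * m (ring x)

/-- The macroscopic observable `φ_N^i` (density of particles on ring `i`),
for an `N = R` particle configuration. -/
noncomputable def phi (R : ℕ) (i : Fin 3) (x : Fin R → State R) : ℝ :=
  (1 / (R : ℝ)) * ∑ j, (if ring (x j) = i then 1 else 0)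

/-- The cumulant generating function
`ψ_N(μ, η₁, η₂, U_t) = (1/N) log ⟨exp(N(η₁ φ_N¹ + η₂ φ_N²))(U_t(x))⟩_μ`,
where `μ` is the product of the single-particle density `μ̂` and the evolution
is the product of the single-particle map `F` (here `N = R`). -/
noncomputable def psi (R : ℕ) (μ : State R → ℝ) (η₁ η₂ : ℝ)
    (F : State R → State R) : ℝ :=
  (1 / (R : ℝ)) * Real.log (∑ x : Fin R → State R,
    (∏ j, μ (x j)) *
      Real.exp ((R : ℝ) * (η₁ * phi R 0 (fun j => F (x j)) +
        η₂ * phi R 1 (fun j => F (x j)))))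

/-- First component of `m_N = ∇_η ψ_N`. -/
noncomputable def mN1 (R : ℕ) (μ : State R → ℝ) (η₁ η₂ : ℝ)
    (F : State R → State R) : ℝ :=
  deriv (fun a => psi R μ a η₂ F) η₁

/-- Second component of `m_N = ∇_η ψ_N`. -/
noncomputable def mN2 (R : ℕ) (μ : State R → ℝ) (η₁ η₂ : ℝ)
    (F : State R → State R) : ℝ :=
  deriv (fun b => psi R μ η₁ b F) η₂

/-- Expected density on ring `i` at the (single-particle) evolution `F`,
starting from the single-particle Gibbs measure with ring densities `m`:
`b_i = ⟨1_{R_i}(F(·))⟩_{ρ̂^m}`. -/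
noncomputable def bm (R : ℕ) (m : Fin 3 → ℝ) (F : State R → State R)
    (i : Fin 3) : ℝ :=
  ∑ x : State R, rhoM R m x * (if ring (F x) = i then 1 else 0)

/-- Vertical translation by one site. -/
def vshift {R : ℕ} (x : State R) : State R := ((x.1.1, fsucc x.1.2), x.2)

/-- The averaged one-step transition kernel `K(x;x') = Q[F¹(x') = x]`. -/
noncomputable def kern (R : ℕ) (γ : ℝ) (x x' : State R) : ℝ :=
  ∑ σ : IConfig R, wt R γ σ * (if step (xi1 σ) x' = x then 1 else 0)

end Mirror

namespace Mirror

lemma fpred_fsucc {R : ℕ} (k : Fin R) : fpred (fsucc k) = k := by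
  have hR : 0 < R := k.pos
  apply Fin.ext
  simp only [fpred, fsucc]
  rcases Nat.lt_or_ge (k.1 + 1) R with h | h
  · rw [Nat.mod_eq_of_lt h]
    have h2 : k.1 + 1 + (R - 1) = k.1 + R := by omega
    rw [h2, Nat.add_mod_right, Nat.mod_eq_of_lt k.isLt]
  · have hk : k.1 + 1 = R := by have := k.isLt; omega
    rw [hk, Nat.mod_self, Nat.zero_add, Nat.mod_eq_of_lt (show R - 1 < R by omega)]
    omega

lemma fsucc_fpred {R : ℕ} (k : Fin R) : fsucc (fpred k) = k := by
  have hR : 0 < R := k.pos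
  apply Fin.ext
  simp only [fpred, fsucc]
  rcases Nat.eq_zero_or_pos k.1 with h | h
  · rw [h, Nat.zero_add, Nat.mod_eq_of_lt (show R - 1 < R by omega)]
    have h2 : R - 1 + 1 = R := by omega
    rw [h2, Nat.mod_self]
  · have h2 : k.1 + (R - 1) = R + (k.1 - 1) := by omega
    rw [h2, Nat.add_mod_left, Nat.mod_eq_of_lt (show k.1 - 1 < R by have := k.isLt; omega)]
    have h3 : k.1 - 1 + 1 = k.1 := by omega
    rw [h3, Nat.mod_eq_of_lt k.isLt]

/-- Explicit inverse of the single-particle dynamics (valid when the outer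
walls carry mirrors everywhere). -/
def stepInv {R : ℕ} (ξ : Config R) : State R → State R :=
  fun x =>
    match x with
    | ((i, k), p) =>
      match p with
      | .pe =>
        if ξ ⟨i.1, by have := i.isLt; omega⟩ (fpred k) then ((i, fpred k), .mm)
        else ((i - 1, fpred k), .pe)
      | .mm =>
        if ξ ⟨i.1 + 1, by have := i.isLt; omega⟩ (fpred k) then ((i, fpred k), .pe)
        else ((i + 1, fpred k), .mm)
      | .pm =>
        if ξ ⟨i.1, by have := i.isLt; omega⟩ k then ((i, fsucc k), .me)
        else ((i - 1, fsucc k), .pm)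
      | .me =>
        if ξ ⟨i.1 + 1, by have := i.isLt; omega⟩ k then ((i, fsucc k), .pm)
        else ((i + 1, fsucc k), .me)

lemma stepInv_step {R : ℕ} (ξ : Config R)
    (h0 : ∀ k : Fin R, ξ 0 k = true) (h3 : ∀ k : Fin R, ξ 3 k = true) :
    Function.LeftInverse (stepInv ξ) (step ξ) := by
  rintro ⟨⟨i, k⟩, p⟩
  cases p <;> fin_cases i <;>
    · simp only [step, wall, site, Vel.right, if_true, if_false, Bool.false_eq_true,
        reduceIte]
      split <;>
        · rename_i hmir
          simp_all [stepInv, fpred_fsucc, fsucc_fpred, Fin.ext_iff]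

lemma step_injective {R : ℕ} (ξ : Config R)
    (h0 : ∀ k : Fin R, ξ 0 k = true) (h3 : ∀ k : Fin R, ξ 3 k = true) :
    Function.Injective (step ξ) :=
  (stepInv_step ξ h0 h3).injective

lemma ring_step {R : ℕ} (ξ : Config R)
    (h0 : ∀ k : Fin R, ξ 0 k = true)
    (h2 : ∀ k : Fin R, ξ 2 k = true)
    (h3 : ∀ k : Fin R, ξ 3 k = true)
    (x : State R) : ring (step ξ x) = 2 ↔ ring x = 2 := by
  obtain ⟨⟨i, k⟩, p⟩ := x
  cases p <;> fin_cases i <;>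
    · simp only [step, wall, site, Vel.right, if_true, if_false, Bool.false_eq_true,
        reduceIte]
      split <;>
        · rename_i hmir
          simp_all [ring, Fin.ext_iff]

/-- for any configuration `ξ` of internal mirrors on the wall
between `R₁` and `R₂`, provided there are mirrors everywhere on the outer walls
and on the wall between `R₂` and `R₃`, the single-particle map `F_ξ` is a
bijection of `Σ̂₁ = (R₁ ∪ R₂) × P` onto itself; consequently the uniform
distribution `ρ₁(q,p) = Πᵢ (1/(8R)) 1_{R₁∪R₂}(qᵢ)` on `Σ₁ = ((R₁∪R₂) × P)^N`
is invariant under the `N`-particle dynamics `U_ξ(·,t)` for every `t ≥ 1`. -/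
theorem rho1_invariant (R N : ℕ) (ξ : Config R)
    (h0 : ∀ k : Fin R, ξ 0 k = true)
    (h2 : ∀ k : Fin R, ξ 2 k = true)
    (h3 : ∀ k : Fin R, ξ 3 k = true) :
    Set.BijOn (step ξ) {x : State R | ring x ≠ 2} {x : State R | ring x ≠ 2} ∧
    (∀ t : ℕ, 1 ≤ t → ∀ y : Fin N → State R,
      (∑ x : Fin N → State R,
        if (fun j => iter ξ t (x j)) = y then ∏ j, rho1 R (x j) else 0) =
        ∏ j, rho1 R (y j)) := by
  have hinj : Function.Injective (step ξ) := step_injective ξ h0 h3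
  have hbij : Function.Bijective (step ξ) := Finite.injective_iff_bijective.mp hinj
  have hring : ∀ x, ring (step ξ x) = 2 ↔ ring x = 2 := ring_step ξ h0 h2 h3
  have hrho : ∀ x, rho1 R (step ξ x) = rho1 R x := by
    intro x
    simp only [rho1]
    by_cases hx : ring x = 2
    · rw [if_neg (not_not_intro ((hring x).mpr hx)), if_neg (not_not_intro hx)]
    · rw [if_pos hx, if_pos (fun h => hx ((hring x).mp h))]
  constructor
  · refine ⟨fun x hx h => hx ((hring x).mp h), hinj.injOn, fun y hy => ?_⟩
    obtain ⟨x, hxy⟩ := hbij.surjective y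
    exact ⟨x, fun h => hy (by rw [← hxy]; exact (hring x).mpr h), hxy⟩
  · have hrhoiterAll : ∀ (s : ℕ) (x : State R), rho1 R (iter ξ s x) = rho1 R x := by
      intro s
      induction s with
      | zero => intro x; simp [iter]
      | succ n ih =>
        intro x
        have h' : iter ξ (n + 1) x = step ξ (iter ξ n x) := by
          unfold iter
          rw [Function.iterate_succ_apply']
        rw [h', hrho, ih]
    intro t _ y
    have hbit : Function.Bijective (iter ξ t) := by
      unfold iter
      exact Function.Bijective.iterate hbij t
    have hrhoiter : ∀ x, rho1 R (iter ξ t x) = rho1 R x := hrhoiterAll t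
    set e : State R ≃ State R := Equiv.ofBijective _ hbit with he
    have hcond : ∀ x : Fin N → State R,
        ((fun j => iter ξ t (x j)) = y) ↔ x = fun j => e.symm (y j) := by
      intro x
      constructor
      · intro h
        funext j
        have h1 : iter ξ t (x j) = y j := congrFun h j
        have h2 : e (x j) = y j := h1
        rw [← h2, Equiv.symm_apply_apply]
      · intro h
        subst h
        funext j
        exact Equiv.ofBijective_apply_symm_apply _ hbit (y j)
    have step1 : (∑ x : Fin N → State R,
        if (fun j => iter ξ t (x j)) = y then ∏ j, rho1 R (x j) else 0) =
        ∑ x : Fin N → State R,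
          if x = (fun j => e.symm (y j)) then ∏ j, rho1 R (x j) else 0 := by
      refine Finset.sum_congr rfl fun x _ => ?_
      exact if_congr (hcond x) rfl rfl
    rw [step1, Finset.sum_ite_eq' Finset.univ (fun j => e.symm (y j))
      (fun x => ∏ j, rho1 R (x j)), if_pos (Finset.mem_univ _)]
    refine Finset.prod_congr rfl fun j _ => ?_
    rw [← hrhoiter (e.symm (y j)),
      show iter ξ t (e.symm (y j)) = y j from Equiv.ofBijective_apply_symm_apply _ hbit (y j)]

end Mirror
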